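/- For all positive integers n and p with p ≤ n, the generalized q-binomial coefficient satisfies (n choose p,n)_q = [n choose p]_q, where (n choose p,k)_q = ([n]_q/[k]_q) · Σ_{r≥0} [p choose r]_q [n-p choose r]_q [n-r-1 choose k-r-1]_q q^{(n-p)p + r(r-k)}. -/

import Mathlib

open Finset

/-- The variable `q`, as a rational function over `ℚ`. -/
noncomputable def q : RatFunc ℚ := RatFunc.X

/-- The q-integer `[m]_q = (1 - q^m)/(1 - q)`. -/
noncomputable def qint (m : ℕ) : RatFunc ℚ := (1 - q ^ m) / (1 - q)

/-- The q-integer for an integer exponent, `[x; q] = (q^x - 1)/(q - 1)`. -/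
noncomputable def qintZ (x : ℤ) : RatFunc ℚ := (q ^ x - 1) / (q - 1)

/-- The q-factorial `[m]!_q`. -/
noncomputable def qfac (m : ℕ) : RatFunc ℚ := ∏ i ∈ Finset.range m, qint (i + 1)

/-- The Gaussian q-binomial coefficient `[a choose b]_q`, zero when `b < 0` or `b > a`. -/
noncomputable def qbin (a b : ℤ) : RatFunc ℚ :=
  if 0 ≤ b ∧ b ≤ a then qfac a.toNat / (qfac b.toNat * qfac (a - b).toNat) else 0

/-- The first generalized q-binomial coefficient `(n choose p, k)_q`:
`([n]_q/[k]_q) · Σ_{r≥0} [p choose r]_q [n-p choose r]_q [n-r-1 choose k-r-1]_q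
  q^{(n-p)p + r(r-k)}`. -/
noncomputable def gchoose (n p k : ℕ) : RatFunc ℚ :=
  (qint n / qint k) *
    ∑ r ∈ Finset.range (n + 1),
      qbin p r * qbin ((n : ℤ) - p) r * qbin ((n : ℤ) - r - 1) ((k : ℤ) - r - 1) *
        q ^ (((n : ℤ) - p) * p + (r : ℤ) * ((r : ℤ) - k))

theorem q_ne : q ≠ 0 := RatFunc.X_ne_zero

theorem one_sub_q_pow_ne (m : ℕ) (hm : 0 < m) : 1 - q ^ m ≠ 0 := by
  unfold q
  rw [← RatFunc.algebraMap_X (K := ℚ), ← map_pow, ← map_one (algebraMap (Polynomial ℚ) (RatFunc ℚ)), ← map_sub]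
  apply RatFunc.algebraMap_ne_zero
  intro h
  have := congrArg (fun p => Polynomial.coeff p m) h
  simp [Polynomial.coeff_one, hm.ne'] at this

theorem qint_ne (m : ℕ) (hm : 0 < m) : qint m ≠ 0 := by
  have h1 := one_sub_q_pow_ne 1 one_pos
  rw [pow_one] at h1
  exact div_ne_zero (one_sub_q_pow_ne m hm) h1

theorem qfac_ne (m : ℕ) : qfac m ≠ 0 := by
  unfold qfac
  exact Finset.prod_ne_zero_iff.2 fun i _ => qint_ne (i+1) (Nat.succ_pos i)

theorem qfac_zero : qfac 0 = 1 := by simp [qfac]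

theorem qfac_succ (m : ℕ) : qfac (m + 1) = qfac m * qint (m + 1) := Finset.prod_range_succ _ _

theorem qint_add (x y : ℕ) : qint (x + y) = qint x + q ^ x * qint y := by
  unfold qint
  rw [mul_div_assoc', ← add_div]
  congr 1
  rw [pow_add]; ring

theorem qbin_nat (a b : ℕ) (h : b ≤ a) :
    qbin a b = qfac a / (qfac b * qfac (a - b)) := by
  have h2 : ((a : ℤ) - b).toNat = a - b := by omega
  rw [qbin, if_pos ⟨Int.natCast_nonneg b, by exact_mod_cast h⟩, h2, Int.toNat_natCast, Int.toNat_natCast]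

theorem qbin_lt (a b : ℕ) (h : a < b) : qbin a b = 0 := by
  rw [qbin, if_neg]; rintro ⟨-, h2⟩; exact absurd (by exact_mod_cast h2) (Nat.not_le.2 h)

theorem qbin_neg (a b : ℤ) (h : b < 0) : qbin a b = 0 := by
  rw [qbin, if_neg]; rintro ⟨h1, -⟩; omega

theorem qbin_zero (a : ℕ) : qbin a 0 = 1 := by
  rw [show (0:ℤ) = ((0:ℕ):ℤ) by simp, qbin_nat a 0 (Nat.zero_le a)]
  simp [qfac_zero, div_self (qfac_ne a)]

theorem qbin_self (a : ℕ) : qbin a a = 1 := by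
  rw [qbin_nat a a le_rfl]
  simp [qfac_zero, div_self (qfac_ne a)]

theorem qbin_symm (a b : ℕ) (h : b ≤ a) : qbin a b = qbin a ((a : ℤ) - b) := by
  rw [show ((a:ℤ) - b) = ((a - b : ℕ) : ℤ) by omega, qbin_nat a b h,
    qbin_nat a (a-b) (Nat.sub_le a b), Nat.sub_sub_self h, mul_comm]

theorem pascal (a b : ℕ) :
    qbin (a + 1 : ℕ) b = qbin a ((b : ℤ) - 1) + q ^ b * qbin a b := by
  match b with
  | 0 =>
      rw [show ((0:ℕ):ℤ) = (0:ℤ) from Nat.cast_zero, qbin_zero (a+1), qbin_zero a,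
        show (0:ℤ)-1 = -1 by norm_num, qbin_neg a (-1) (by norm_num)]
      ring
  | c + 1 =>
      have hmid : ((c+1:ℕ):ℤ) - 1 = ((c:ℕ):ℤ) := by push_cast; ring
      rw [hmid]
      by_cases h1 : c + 1 ≤ a
      · rw [qbin_nat (a+1) (c+1) (by omega), qbin_nat a c (by omega), qbin_nat a (c+1) h1]
        have e1 : a + 1 - (c+1) = a - c := by omega
        have e2 : a - c = (a - (c+1)) + 1 := by omega
        rw [e1, e2, qfac_succ a, qfac_succ c, qfac_succ (a - (c+1))]
        have key : qint (a+1) = qint (c+1) + q^(c+1) * qint (a - (c+1) + 1) := by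
          have h3 : a + 1 = (c+1) + (a - (c+1) + 1) := by omega
          rw [h3, qint_add]
        rw [key]
        have n1 := qfac_ne c
        have n2 := qfac_ne (a - (c+1))
        have n3 := qint_ne (c+1) (by omega)
        have n4 := qint_ne (a - (c+1) + 1) (by omega)
        field_simp
      · by_cases h2 : c = a
        · subst h2
          rw [qbin_self, qbin_self, qbin_lt c (c+1) (by omega)]
          ring
        · rw [qbin_lt (a+1) (c+1) (by omega), qbin_lt a c (by omega), qbin_lt a (c+1) (by omega)]
          ring

theorem term_split (m n K j : ℕ) :
    qbin ((m+1:ℕ)) (j:ℕ) * qbin n (((K+1:ℕ):ℤ) - j) * q ^ ((((m+1:ℕ):ℤ) - j) * (((K+1:ℕ):ℤ) - j))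
    = qbin m ((j:ℤ) - 1) * qbin n (((K+1:ℕ):ℤ) - j) * q ^ ((((m+1:ℕ):ℤ) - j) * (((K+1:ℕ):ℤ) - j))
      + q ^ (((K+1:ℕ):ℤ)) * (qbin m j * qbin n (((K+1:ℕ):ℤ) - j) * q ^ (((m:ℤ) - j) * (((K+1:ℕ):ℤ) - j))) := by
  have hqq : q ^ j * q ^ ((((m+1:ℕ):ℤ) - j) * (((K+1:ℕ):ℤ) - j))
      = q ^ (((K+1:ℕ):ℤ)) * q ^ (((m:ℤ) - j) * (((K+1:ℕ):ℤ) - j)) := by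
    rw [← zpow_natCast q j, ← zpow_add₀ q_ne, ← zpow_add₀ q_ne]
    congr 1; push_cast; ring
  rw [pascal m j]
  linear_combination (qbin (m:ℤ) (j:ℤ) * qbin (n:ℤ) (((K+1:ℕ):ℤ) - j)) * hqq

theorem term_shift (m n K i : ℕ) :
    qbin (m:ℤ) (((i+1:ℕ):ℤ) - 1) * qbin (n:ℤ) (((K+1:ℕ):ℤ) - ((i+1:ℕ):ℤ)) *
        q ^ ((((m+1:ℕ):ℤ) - ((i+1:ℕ):ℤ)) * (((K+1:ℕ):ℤ) - ((i+1:ℕ):ℤ)))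
      = qbin (m:ℤ) (i:ℤ) * qbin (n:ℤ) ((K:ℤ) - i) * q ^ (((m:ℤ) - i) * ((K:ℤ) - i)) := by
  have e1 : ((i+1:ℕ):ℤ) - 1 = (i:ℤ) := by push_cast; ring
  have e2 : ((K+1:ℕ):ℤ) - ((i+1:ℕ):ℤ) = (K:ℤ) - i := by push_cast; ring
  have e3 : (((m+1:ℕ):ℤ) - ((i+1:ℕ):ℤ)) * (((K+1:ℕ):ℤ) - ((i+1:ℕ):ℤ))
      = ((m:ℤ) - i) * ((K:ℤ) - i) := by push_cast; ring
  rw [e3, e1, e2]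

theorem vdm (m n : ℕ) : ∀ k : ℕ, qbin ((m + n : ℕ)) (k:ℕ) =
    ∑ j ∈ Finset.range (k + 1),
      qbin (m:ℤ) (j:ℤ) * qbin (n:ℤ) ((k:ℤ) - j) * q ^ (((m:ℤ) - j) * ((k:ℤ) - j)) := by
  induction m with
  | zero =>
    intro k
    rw [Finset.sum_eq_single 0]
    · rw [qbin_self 0]
      simp
    · intro j _ hj0
      rw [qbin_lt 0 j (Nat.pos_of_ne_zero hj0)]
      ring
    · intro h
      exact absurd (Finset.mem_range.2 (by omega)) h
  | succ m ih =>
    intro k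
    rcases k with _ | K
    · rw [Finset.sum_range_one]
      simp only [Nat.cast_zero, sub_zero, mul_zero, zpow_zero]
      rw [qbin_zero, qbin_zero, qbin_zero]
      ring
    · have hL : (m + 1 + n) = (m + n) + 1 := by omega
      rw [hL, pascal (m+n) (K+1),
        show ((K+1:ℕ):ℤ) - 1 = ((K:ℕ):ℤ) by push_cast; ring,
        ih K, ih (K+1), ← zpow_natCast q (K+1)]
      have h1 : (∑ j ∈ Finset.range (K+1+1),
            qbin ((m+1:ℕ):ℤ) (j:ℤ) * qbin (n:ℤ) (((K+1:ℕ):ℤ) - j) *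
              q ^ ((((m+1:ℕ):ℤ) - j) * (((K+1:ℕ):ℤ) - j)))
          = (∑ j ∈ Finset.range (K+1+1),
              (qbin (m:ℤ) ((j:ℤ)-1) * qbin (n:ℤ) (((K+1:ℕ):ℤ) - j) *
                  q ^ ((((m+1:ℕ):ℤ) - j) * (((K+1:ℕ):ℤ) - j))
                + q ^ (((K+1:ℕ):ℤ)) * (qbin (m:ℤ) (j:ℤ) * qbin (n:ℤ) (((K+1:ℕ):ℤ) - j) *
                    q ^ (((m:ℤ) - j) * (((K+1:ℕ):ℤ) - j))))) :=
        Finset.sum_congr rfl (fun j _ => term_split m n K j)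
      have h2 : (∑ j ∈ Finset.range (K+1+1),
            qbin (m:ℤ) ((j:ℤ)-1) * qbin (n:ℤ) (((K+1:ℕ):ℤ) - j) *
              q ^ ((((m+1:ℕ):ℤ) - j) * (((K+1:ℕ):ℤ) - j)))
          = ∑ i ∈ Finset.range (K+1),
              qbin (m:ℤ) (i:ℤ) * qbin (n:ℤ) ((K:ℤ) - i) * q ^ (((m:ℤ) - i) * ((K:ℤ) - i)) := by
        rw [Finset.sum_range_succ']
        rw [Finset.sum_congr rfl (fun i (_ : i ∈ Finset.range (K+1)) => term_shift m n K i)]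
        have hz : ((0:ℕ):ℤ) - 1 = (-1:ℤ) := by norm_num
        rw [show qbin (m:ℤ) (((0:ℕ):ℤ)-1) * qbin (n:ℤ) (((K+1:ℕ):ℤ) - ((0:ℕ):ℤ)) *
              q ^ ((((m+1:ℕ):ℤ) - ((0:ℕ):ℤ)) * (((K+1:ℕ):ℤ) - ((0:ℕ):ℤ))) = 0 from by
            rw [hz, qbin_neg m (-1) (by norm_num), zero_mul, zero_mul], add_zero]
      rw [h1, Finset.sum_add_distrib, ← Finset.mul_sum, h2]


theorem gchoose_k_eq_n (n p : ℕ) (hn : 0 < n) (hp : 0 < p) (hpn : p ≤ n) :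
    gchoose n p n = qbin n p := by
  unfold gchoose
  rw [div_self (qint_ne n hn), one_mul]
  rw [show ((n:ℤ) - p) = ((n - p : ℕ) : ℤ) by omega]
  have hterm : ∀ r ∈ Finset.range (n+1),
      qbin (p:ℤ) (r:ℤ) * qbin ((n-p:ℕ):ℤ) (r:ℤ) * qbin ((n:ℤ) - r - 1) ((n:ℤ) - r - 1) *
        q ^ (((n-p:ℕ):ℤ) * p + (r:ℤ) * ((r:ℤ) - n))
      = qbin ((n-p:ℕ):ℤ) (r:ℤ) * qbin (p:ℤ) ((p:ℤ) - r) *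
          q ^ ((((n-p:ℕ):ℤ) - r) * ((p:ℤ) - r)) := by
    intro r hr
    have hrn : r ≤ n := by
      have := Finset.mem_range.mp hr; omega
    by_cases hrp : r ≤ p
    · by_cases hrn' : r < n
      · have hself : qbin ((n:ℤ) - r - 1) ((n:ℤ) - r - 1) = 1 := by
          rw [show (n:ℤ) - r - 1 = ((n - r - 1 : ℕ) : ℤ) by omega]
          exact qbin_self (n - r - 1)
        have hsymm : qbin (p:ℤ) ((p:ℤ) - r) = qbin (p:ℤ) (r:ℤ) := (qbin_symm p r hrp).symm
        have hexp : ((n-p:ℕ):ℤ) * p + (r:ℤ) * ((r:ℤ) - n)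
            = (((n-p:ℕ):ℤ) - r) * ((p:ℤ) - r) := by
          rw [show ((n-p:ℕ):ℤ) = (n:ℤ) - p by omega]; ring
        rw [hself, hsymm, hexp]; ring
      · rw [qbin_lt (n-p) r (by omega)]; ring
    · rw [qbin_lt p r (by omega), qbin_neg (p:ℤ) ((p:ℤ) - r) (by omega)]; ring
  rw [Finset.sum_congr rfl hterm]
  rw [← Finset.sum_subset (Finset.range_mono (by omega : p+1 ≤ n+1))
    (fun r _ hr2 => by
      rw [qbin_neg (p:ℤ) ((p:ℤ) - r) (by simp at hr2; omega)]; ring)]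
  rw [← vdm (n-p) p p, Nat.sub_add_cancel hpn]
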